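/- arXiv:2003.09107 — 2 statements merged into one kernel-verified Lean document; each statement's English description precedes it below -/
import Mathlib

section
/- Let V be a finite-dimensional vector space over ℂ, B a symmetric bilinear form on V, and g : V ≃ V a linear automorphism preserving B, i.e. B(g x, g y) = B(x, y) for all x, y ∈ V. Let s : V ≃ V be a ℂ-linear equivalence such that s x = λ • x for every λ ∈ ℂ and every x in the generalized eigenspace of g with eigenvalue λ. Then B is invariant under the unipotent part u = s⁻¹ ∘ g of g: B(u x, u y) = B(x, y) for all x, y ∈ V. -/
/-- Orthogonality of generalized eigenspaces: if `g` preserves `B` and `lam * mu ≠ 1`, then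
elements killed by `(g - lam)^k` and `(g - mu)^l` pair to zero. -/
private lemma gen_eig_orth
    (V : Type*) [AddCommGroup V] [Module ℂ V]
    (B : V →ₗ[ℂ] V →ₗ[ℂ] ℂ)
    (g : V ≃ₗ[ℂ] V) (hBg : ∀ x y : V, B (g x) (g y) = B x y)
    (lam mu : ℂ) (hlm : lam * mu ≠ 1) :
    ∀ n k l : ℕ, k + l ≤ n → ∀ x y : V,
      ((g.toLinearMap - lam • 1) ^ k) x = 0 →
      ((g.toLinearMap - mu • 1) ^ l) y = 0 →
      B x y = 0 := by
  intro n
  induction n with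
  | zero =>
    intro k l hkl x y hx hy
    obtain ⟨rfl, rfl⟩ : k = 0 ∧ l = 0 := by omega
    simp only [pow_zero, Module.End.one_apply] at hx
    simp [hx]
  | succ n ih =>
    intro k l hkl x y hx hy
    rcases Nat.eq_zero_or_pos k with rfl | hk
    · simp only [pow_zero, Module.End.one_apply] at hx
      simp [hx]
    rcases Nat.eq_zero_or_pos l with rfl | hl
    · simp only [pow_zero, Module.End.one_apply] at hy
      simp [hy]
    set Nx := (g.toLinearMap - lam • 1) x with hNx
    set Ny := (g.toLinearMap - mu • 1) y with hNy
    have hgx : g x = Nx + lam • x := by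
      simp [hNx, sub_add_cancel]
    have hgy : g y = Ny + mu • y := by
      simp [hNy, sub_add_cancel]
    have hNxk : ((g.toLinearMap - lam • 1) ^ (k - 1)) Nx = 0 := by
      rw [hNx, ← Module.End.mul_apply, ← pow_succ]
      rwa [Nat.sub_add_cancel hk]
    have hNyl : ((g.toLinearMap - mu • 1) ^ (l - 1)) Ny = 0 := by
      rw [hNy, ← Module.End.mul_apply, ← pow_succ]
      rwa [Nat.sub_add_cancel hl]
    have h1 : B Nx Ny = 0 := ih (k - 1) (l - 1) (by omega) _ _ hNxk hNyl
    have h2 : B Nx y = 0 := ih (k - 1) l (by omega) _ _ hNxk hy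
    have h3 : B x Ny = 0 := ih k (l - 1) (by omega) _ _ hx hNyl
    have key : B x y = B (g x) (g y) := (hBg x y).symm
    rw [hgx, hgy] at key
    simp only [map_add, map_smul, LinearMap.add_apply, LinearMap.smul_apply, h1, h2, h3,
      smul_eq_mul, mul_zero, zero_add, add_zero, smul_smul] at key
    have h4 : (1 - lam * mu) * B x y = 0 := by linear_combination key
    rcases mul_eq_zero.mp h4 with h | h
    · exact absurd (by linear_combination -h) hlm
    · exact h

private lemma s_preserves
    (V : Type*) [AddCommGroup V] [Module ℂ V] [FiniteDimensional ℂ V]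
    (B : V →ₗ[ℂ] V →ₗ[ℂ] ℂ)
    (g : V ≃ₗ[ℂ] V) (hBg : ∀ x y : V, B (g x) (g y) = B x y)
    (s : V ≃ₗ[ℂ] V)
    (hs : ∀ (lam : ℂ) (x : V),
      x ∈ Module.End.maxGenEigenspace g.toLinearMap lam → s x = lam • x)
    (x y : V) : B (s x) (s y) = B x y := by
  have htop := Module.End.iSup_maxGenEigenspace_eq_top g.toLinearMap
  have hx : x ∈ ⨆ lam : ℂ, Module.End.maxGenEigenspace g.toLinearMap lam := by
    rw [htop]; trivial
  have hy : y ∈ ⨆ lam : ℂ, Module.End.maxGenEigenspace g.toLinearMap lam := by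
    rw [htop]; trivial
  induction hx using Submodule.iSup_induction' with
  | mem lam x hxm =>
    induction hy using Submodule.iSup_induction' with
    | mem mu y hym =>
      rw [hs lam x hxm, hs mu y hym]
      simp only [map_smul, LinearMap.smul_apply, smul_eq_mul, ← mul_assoc]
      by_cases h : lam * mu = 1
      · rw [mul_comm mu lam, h, one_mul]
      · obtain ⟨k, hk⟩ := (Module.End.mem_maxGenEigenspace _ _ _).mp hxm
        obtain ⟨l, hl⟩ := (Module.End.mem_maxGenEigenspace _ _ _).mp hym
        rw [gen_eig_orth V B g hBg lam mu h (k + l) k l le_rfl x y hk hl, mul_zero]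
    | zero => simp
    | add y₁ h₁ y₂ h₂ ih₁ ih₂ => simp [ih₁, ih₂]
  | zero => simp
  | add x₁ h₁ x₂ h₂ ih₁ ih₂ =>
    simp only [map_add, LinearMap.add_apply]
    rw [ih₁, ih₂]

/-- If a linear automorphism `g` of a finite-dimensional complex vector space preserves a
symmetric bilinear form `B`, then so does the unipotent part `u = s⁻¹ ∘ g` of `g`, where `s`
is the semisimple part of `g`, i.e. the linear equivalence acting as the scalar `λ` on each
generalized eigenspace of `g` with eigenvalue `λ`. -/
theorem bilin_invariant_under_unipotentPart
    (V : Type*) [AddCommGroup V] [Module ℂ V] [FiniteDimensional ℂ V]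
    (B : V →ₗ[ℂ] V →ₗ[ℂ] ℂ) (hBsymm : ∀ x y : V, B x y = B y x)
    (g : V ≃ₗ[ℂ] V) (hBg : ∀ x y : V, B (g x) (g y) = B x y)
    (s : V ≃ₗ[ℂ] V)
    (hs : ∀ (lam : ℂ) (x : V),
      x ∈ Module.End.maxGenEigenspace g.toLinearMap lam → s x = lam • x)
    (x y : V) : B (s.symm (g x)) (s.symm (g y)) = B x y := by
  have := s_preserves V B g hBg s hs (s.symm (g x)) (s.symm (g y))
  rw [s.apply_symm_apply, s.apply_symm_apply] at this
  rw [← this, hBg]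
end

section
/- Let L be a finite-dimensional Lie algebra over ℂ and g a Lie algebra automorphism of L. Let S be the submodule of L spanned by (i.e. the supremum of) the generalized eigenspaces of g whose eigenvalues are positive real numbers. Then S is closed under the Lie bracket: if x ∈ S and y ∈ S then ⁅x, y⁆ ∈ S. -/
/-- Brackets of generalized eigenvectors of a Lie algebra automorphism are generalized
eigenvectors for the product of the eigenvalues. -/
lemma bracket_mem_maxGenEigenspace_mul
    {L : Type*} [LieRing L] [LieAlgebra ℂ L]
    (g : L ≃ₗ⁅ℂ⁆ L) (lam mu : ℂ) (x y : L)
    (hx : x ∈ Module.End.maxGenEigenspace g.toLinearEquiv.toLinearMap lam)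
    (hy : y ∈ Module.End.maxGenEigenspace g.toLinearEquiv.toLinearMap mu) :
    ⁅x, y⁆ ∈ Module.End.maxGenEigenspace g.toLinearEquiv.toLinearMap (lam * mu) := by
  set f : Module.End ℂ L := g.toLinearEquiv.toLinearMap with hf
  rw [Module.End.mem_maxGenEigenspace] at hx hy
  obtain ⟨m, hm⟩ := hx
  obtain ⟨n, hn⟩ := hy
  suffices h : ∀ N m n, m + n ≤ N → ∀ x y : L,
      ((f - lam • (1 : Module.End ℂ L)) ^ m) x = 0 →
      ((f - mu • (1 : Module.End ℂ L)) ^ n) y = 0 →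
      ⁅x, y⁆ ∈ f.maxGenEigenspace (lam * mu) by
    exact h (m + n) m n le_rfl x y hm hn
  intro N
  induction N with
  | zero =>
    intro m n hmn x y hx hy
    obtain ⟨rfl, rfl⟩ : m = 0 ∧ n = 0 := by omega
    simp only [pow_zero, Module.End.one_apply] at hx
    subst hx
    simp only [zero_lie]
    exact Submodule.zero_mem _
  | succ N ih =>
    intro m n hmn x y hx hy
    match m, n with
    | 0, n =>
      simp only [pow_zero, Module.End.one_apply] at hx
      subst hx
      simp only [zero_lie]
      exact Submodule.zero_mem _
    | m, 0 =>
      simp only [pow_zero, Module.End.one_apply] at hy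
      subst hy
      simp only [lie_zero]
      exact Submodule.zero_mem _
    | (m' + 1), (n' + 1) =>
      have hflie : ∀ a b : L, f ⁅a, b⁆ = ⁅f a, f b⁆ := by
        intro a b
        have := g.map_lie (x := a) (y := b)
        simpa [hf] using this
      have key : (f - (lam * mu) • (1 : Module.End ℂ L)) ⁅x, y⁆ =
          ⁅(f - lam • (1 : Module.End ℂ L)) x, f y⁆
            + lam • ⁅x, (f - mu • (1 : Module.End ℂ L)) y⁆ := by
        simp only [LinearMap.sub_apply, LinearMap.smul_apply, Module.End.one_apply,
          sub_lie, lie_sub, lie_smul, smul_lie, smul_sub, hflie, mul_smul]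
        abel
      have h1 : ⁅(f - lam • (1 : Module.End ℂ L)) x, f y⁆ ∈
          f.maxGenEigenspace (lam * mu) := by
        apply ih m' (n' + 1) (by omega)
        · rw [← Module.End.mul_apply, ← pow_succ]
          exact hx
        · have hcomm : Commute ((f - mu • (1 : Module.End ℂ L)) ^ (n' + 1)) f := by
            apply Commute.pow_left
            exact ((Commute.refl f).sub_left ((Commute.one_left f).smul_left mu))
          rw [← Module.End.mul_apply, hcomm.eq, Module.End.mul_apply, hy, map_zero]
      have h2 : ⁅x, (f - mu • (1 : Module.End ℂ L)) y⁆ ∈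
          f.maxGenEigenspace (lam * mu) := by
        apply ih (m' + 1) n' (by omega) x _ hx
        rw [← Module.End.mul_apply, ← pow_succ]
        exact hy
      have hz : (f - (lam * mu) • (1 : Module.End ℂ L)) ⁅x, y⁆ ∈
          f.maxGenEigenspace (lam * mu) := by
        rw [key]
        exact Submodule.add_mem _ h1 (Submodule.smul_mem _ _ h2)
      rw [Module.End.mem_maxGenEigenspace] at hz ⊢
      obtain ⟨k, hk⟩ := hz
      exact ⟨k + 1, by rw [pow_succ, Module.End.mul_apply]; exact hk⟩

/-- The sum of the generalized eigenspaces of a Lie algebra automorphism `g` of a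
finite-dimensional complex Lie algebra whose eigenvalues are positive real numbers is closed
under the Lie bracket. -/
theorem bracket_mem_sup_maxGenEigenspace_posReal
    (L : Type*) [LieRing L] [LieAlgebra ℂ L] [FiniteDimensional ℂ L]
    (g : L ≃ₗ⁅ℂ⁆ L)
    (S : Submodule ℂ L)
    (hS : S = ⨆ lam ∈ {lam : ℂ | ∃ r : ℝ, 0 < r ∧ lam = (r : ℂ)},
      Module.End.maxGenEigenspace g.toLinearEquiv.toLinearMap lam)
    (x y : L) (hx : x ∈ S) (hy : y ∈ S) : ⁅x, y⁆ ∈ S := by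
  subst hS
  set P : Set ℂ := {lam : ℂ | ∃ r : ℝ, 0 < r ∧ lam = (r : ℂ)} with hP
  set E : ℂ → Submodule ℂ L :=
    fun lam => Module.End.maxGenEigenspace g.toLinearEquiv.toLinearMap lam with hE
  have hx' : x ∈ ⨆ p : P, E p := by rw [iSup_subtype'']; exact hx
  have hy' : y ∈ ⨆ p : P, E p := by rw [iSup_subtype'']; exact hy
  suffices h : ⁅x, y⁆ ∈ ⨆ p : P, E p by rwa [iSup_subtype''] at h
  refine Submodule.iSup_induction (motive := fun x => ⁅x, y⁆ ∈ ⨆ p : P, E p) _ hx' ?_ ?_ ?_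
  · rintro ⟨lam, hlam⟩ x hxlam
    refine Submodule.iSup_induction (motive := fun y => ⁅x, y⁆ ∈ ⨆ p : P, E p) _ hy' ?_ ?_ ?_
    · rintro ⟨mu, hmu⟩ y hymu
      have hmem : ⁅x, y⁆ ∈ E (lam * mu) :=
        bracket_mem_maxGenEigenspace_mul g lam mu x y hxlam hymu
      have hlm : lam * mu ∈ P := by
        obtain ⟨r, hr, rfl⟩ := hlam
        obtain ⟨s, hs, rfl⟩ := hmu
        exact ⟨r * s, mul_pos hr hs, by push_cast; ring⟩
      exact le_iSup (fun p : P => E p) ⟨lam * mu, hlm⟩ hmem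
    · simp only [lie_zero]
      exact Submodule.zero_mem _
    · intro a b ha hb
      rw [lie_add]
      exact Submodule.add_mem _ ha hb
  · simp only [zero_lie]
    exact Submodule.zero_mem _
  · intro a b ha hb
    rw [add_lie]
    exact Submodule.add_mem _ ha hb
end
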